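/- arXiv:1906.10505 — 13 statements merged into one kernel-verified Lean document; each statement's English description precedes it below -/
import Mathlib

section
/- A set V belongs to τ^α if and only if V ⊆ int_τ(cl_τ(int_τ(V))). -/
/-- The collection τ^α = {V \ N : V ∈ τ, N nowhere dense in (X,τ)}. -/
def alphaOpens (X : Type*) [TopologicalSpace X] : Set (Set X) :=
  {U | ∃ V N : Set X, IsOpen V ∧ IsNowhereDense N ∧ U = V \ N}

/-- The topology τ^α (generated by the collection `alphaOpens`, which is itself a topology). -/
def tAlpha (X : Type*) [TopologicalSpace X] : TopologicalSpace X :=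
  TopologicalSpace.generateFrom (alphaOpens X)

lemma alpha_cond_of_mem {X : Type*} [TopologicalSpace X] {V : Set X}
    (h : V ∈ alphaOpens X) : V ⊆ interior (closure (interior V)) := by
  obtain ⟨U, N, hU, hN, rfl⟩ := h
  have h1 : U \ closure N ⊆ interior (U \ N) :=
    (hU.sdiff isClosed_closure).subset_interior_iff.mpr
      (Set.diff_subset_diff_right subset_closure)
  have h2 : U ⊆ closure (U \ closure N) := by
    intro x hx
    by_contra hxc
    have hW : IsOpen (U ∩ (closure (U \ closure N))ᶜ) :=
      hU.inter isClosed_closure.isOpen_compl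
    have hsub : U ∩ (closure (U \ closure N))ᶜ ⊆ closure N := by
      intro y ⟨hyU, hyc⟩
      by_contra hyN
      exact hyc (subset_closure ⟨hyU, hyN⟩)
    have : x ∈ interior (closure N) :=
      interior_maximal hsub hW ⟨hx, hxc⟩
    rw [show interior (closure N) = ∅ from hN] at this
    exact this
  have h3 : U ⊆ interior (closure (interior (U \ N))) :=
    interior_maximal (h2.trans (closure_mono h1)) hU
  exact Set.diff_subset.trans h3

lemma mem_of_alpha_cond {X : Type*} [TopologicalSpace X] {V : Set X}
    (h : V ⊆ interior (closure (interior V))) : V ∈ alphaOpens X := by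
  refine ⟨interior (closure (interior V)), interior (closure (interior V)) \ V,
    isOpen_interior, ?_, ?_⟩
  · have hsub : interior (closure (interior V)) \ V ⊆ closure (interior V) \ interior V :=
      Set.diff_subset_diff interior_subset interior_subset
    rw [IsNowhereDense]
    rw [Set.eq_empty_iff_forall_notMem]
    intro x hx
    have hx' : x ∈ interior (closure (closure (interior V) \ interior V)) :=
      interior_mono (closure_mono hsub) hx
    rw [IsClosed.closure_eq (isClosed_closure.sdiff isOpen_interior)] at hx'
    have hW : IsOpen (interior (closure (interior V) \ interior V)) := isOpen_interior
    have h1 : interior (closure (interior V) \ interior V) ⊆ closure (interior V) :=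
      interior_subset.trans Set.diff_subset
    have h2 : interior (closure (interior V) \ interior V) ∩ interior V = ∅ := by
      rw [Set.eq_empty_iff_forall_notMem]
      rintro y ⟨hy1, hy2⟩
      exact (interior_subset hy1).2 hy2
    have h3 : interior (closure (interior V) \ interior V) ⊆
        closure (interior (closure (interior V) \ interior V) ∩ interior V) := by
      intro y hy
      exact IsOpen.inter_closure (t := interior V) hW ⟨hy, h1 hy⟩
    rw [h2, closure_empty] at h3
    exact h3 hx'
  · rw [Set.diff_diff_right, Set.diff_self, Set.empty_union]
    exact (Set.inter_eq_right.mpr h).symm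

lemma alpha_inter {X : Type*} [TopologicalSpace X] {A B : Set X}
    (hA : A ⊆ interior (closure (interior A))) (hB : B ⊆ interior (closure (interior B))) :
    A ∩ B ⊆ interior (closure (interior (A ∩ B))) := by
  set W := interior (closure (interior A)) ∩ interior (closure (interior B)) with hWdef
  have hW : IsOpen W := isOpen_interior.inter isOpen_interior
  have hsub : A ∩ B ⊆ W := Set.inter_subset_inter hA hB
  have step1 : W ⊆ closure (W ∩ interior A) := fun x hx =>
    hW.inter_closure ⟨hx, interior_subset hx.1⟩
  have step2 : W ∩ interior A ⊆ closure ((W ∩ interior A) ∩ interior B) := fun x hx =>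
    (hW.inter isOpen_interior).inter_closure ⟨hx, interior_subset hx.1.2⟩
  have step3 : W ⊆ closure (interior (A ∩ B)) := by
    refine step1.trans ?_
    rw [← closure_closure (s := interior (A ∩ B))]
    refine closure_mono (step2.trans (closure_mono ?_))
    intro x ⟨⟨_, hxA⟩, hxB⟩
    rw [interior_inter]
    exact ⟨hxA, hxB⟩
  exact hsub.trans (interior_maximal step3 hW)

theorem mem_tauAlpha_iff {X : Type*} [TopologicalSpace X] (V : Set X) :
    @IsOpen X (tAlpha X) V ↔ V ⊆ interior (closure (interior V)) := by
  constructor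
  · intro h
    induction h with
    | basic U hU => exact alpha_cond_of_mem hU
    | univ => simp
    | inter A B _ _ ihA ihB => exact alpha_inter ihA ihB
    | sUnion S _ ih =>
      intro x ⟨U, hUS, hxU⟩
      exact interior_mono (closure_mono (interior_mono (Set.subset_sUnion_of_mem hUS)))
        (ih U hUS hxU)
  · intro h
    exact TopologicalSpace.GenerateOpen.basic V (mem_of_alpha_cond h)
end

section
/- For A ⊆ X and x ∉ A, x belongs to the τ^α-closure of A if and only if x belongs to cl_τ(int_τ(cl_τ(A))). -/
lemma IsNowhereDense.union' {X : Type*} [TopologicalSpace X] {N₁ N₂ : Set X}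
    (h₁ : IsNowhereDense N₁) (h₂ : IsNowhereDense N₂) : IsNowhereDense (N₁ ∪ N₂) := by
  rw [IsNowhereDense, Set.eq_empty_iff_forall_notMem]
  intro y hy
  have hO : IsOpen (interior (closure (N₁ ∪ N₂))) := isOpen_interior
  have hsub : interior (closure (N₁ ∪ N₂)) ⊆ closure N₁ ∪ closure N₂ := by
    rw [← closure_union]; exact interior_subset
  have h1 : interior (closure (N₁ ∪ N₂)) \ closure N₁ ⊆ interior (closure N₂) :=
    interior_maximal (fun z hz => (hsub hz.1).resolve_left hz.2)
      (hO.sdiff isClosed_closure)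
  rw [h₂] at h1
  have h2 : interior (closure (N₁ ∪ N₂)) ⊆ closure N₁ := by
    intro z hz
    by_contra hzc
    exact h1 ⟨hz, hzc⟩
  have h3 : interior (closure (N₁ ∪ N₂)) ⊆ interior (closure N₁) :=
    interior_maximal h2 hO
  rw [h₁] at h3
  exact h3 hy

lemma alphaOpens_basis (X : Type*) [TopologicalSpace X] :
    @TopologicalSpace.IsTopologicalBasis X (tAlpha X) (alphaOpens X) := by
  refine @TopologicalSpace.IsTopologicalBasis.mk X (tAlpha X) (alphaOpens X) ?_ ?_ rfl
  · rintro t₁ ⟨V₁, N₁, hV₁, hN₁, rfl⟩ t₂ ⟨V₂, N₂, hV₂, hN₂, rfl⟩ x hx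
    refine ⟨(V₁ ∩ V₂) \ (N₁ ∪ N₂), ⟨V₁ ∩ V₂, N₁ ∪ N₂, hV₁.inter hV₂,
      hN₁.union' hN₂, rfl⟩, ?_, ?_⟩
    · exact ⟨⟨hx.1.1, hx.2.1⟩, fun h => h.elim hx.1.2 hx.2.2⟩
    · rintro y ⟨⟨h1, h2⟩, h3⟩
      exact ⟨⟨h1, fun hn => h3 (Or.inl hn)⟩, ⟨h2, fun hn => h3 (Or.inr hn)⟩⟩
  · apply Set.eq_univ_of_univ_subset
    rintro x -
    exact ⟨Set.univ, ⟨Set.univ, ∅, isOpen_univ, by simp [IsNowhereDense], by simp⟩, trivial⟩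

theorem mem_closure_tauAlpha_iff {X : Type*} [TopologicalSpace X]
    (A : Set X) (x : X) (hx : x ∉ A) :
    x ∈ @closure X (tAlpha X) A ↔ x ∈ closure (interior (closure A)) := by
  rw [@TopologicalSpace.IsTopologicalBasis.mem_closure_iff X (tAlpha X) (alphaOpens X) (alphaOpens_basis X) A x]
  constructor
  · intro h
    rw [mem_closure_iff]
    intro U hU hxU
    by_contra hdis
    -- N = U ∩ A is nowhere dense
    have hND : IsNowhereDense (U ∩ A) := by
      rw [IsNowhereDense, Set.eq_empty_iff_forall_notMem]
      intro y hy
      have hO : IsOpen (interior (closure (U ∩ A))) := isOpen_interior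
      have hsub : interior (closure (U ∩ A)) ∩ U ⊆ interior (closure A) := by
        apply interior_maximal
        · refine Set.Subset.trans (Set.inter_subset_left.trans interior_subset) ?_
          exact closure_mono Set.inter_subset_right
        · exact hO.inter hU
      have hemp : interior (closure (U ∩ A)) ∩ U = ∅ := by
        by_contra hne
        obtain ⟨z, hz⟩ := Set.nonempty_iff_ne_empty.mpr hne
        exact hdis ⟨z, hz.2, hsub hz⟩
      -- y ∈ closure (U ∩ A), but the open nbhd interior(closure (U∩A)) misses U ∩ A
      have hy' : y ∈ closure (U ∩ A) := interior_subset hy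
      rw [mem_closure_iff] at hy'
      obtain ⟨z, hz1, hz2⟩ := hy' _ hO hy
      have : z ∈ interior (closure (U ∩ A)) ∩ U := ⟨hz1, hz2.1⟩
      rw [hemp] at this
      exact this
    obtain ⟨y, hy1, hy2⟩ := h (U \ (U ∩ A)) ⟨U, U ∩ A, hU, hND, rfl⟩
      ⟨hxU, fun h' => hx h'.2⟩
    exact hy1.2 ⟨hy1.1, hy2⟩
  · rintro h o ⟨V, N, hV, hN, rfl⟩ hxo
    have hVint : (V ∩ interior (closure A)).Nonempty := by
      rw [mem_closure_iff] at h
      exact h V hV hxo.1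
    have hopen : IsOpen ((V ∩ interior (closure A)) \ closure N) :=
      (hV.inter isOpen_interior).sdiff isClosed_closure
    have hne : ((V ∩ interior (closure A)) \ closure N).Nonempty := by
      by_contra hemp
      rw [Set.not_nonempty_iff_eq_empty, Set.diff_eq_empty] at hemp
      have : V ∩ interior (closure A) ⊆ interior (closure N) :=
        interior_maximal hemp (hV.inter isOpen_interior)
      rw [hN] at this
      obtain ⟨z, hz⟩ := hVint
      exact this hz
    obtain ⟨z, hz⟩ := hne
    have hzA : z ∈ closure A := interior_subset hz.1.2
    rw [mem_closure_iff] at hzA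
    obtain ⟨w, hw1, hw2⟩ := hzA _ hopen hz
    exact ⟨w, ⟨hw1.1.1, fun hn => hw1.2 (subset_closure hn)⟩, hw2⟩
end

section
/- A set D ⊆ X is dense in (X, τ) if and only if D is dense in (X, τ^α). -/
lemma myNwdUnion {X : Type*} [TopologicalSpace X] {s t : Set X}
    (hs : IsNowhereDense s) (ht : IsNowhereDense t) : IsNowhereDense (s ∪ t) := by
  have h1 : IsOpen (closure s)ᶜ ∧ Dense (closure s)ᶜ :=
    isClosed_isNowhereDense_iff_compl.mp ⟨isClosed_closure, hs.closure⟩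
  have h2 : IsOpen (closure t)ᶜ ∧ Dense (closure t)ᶜ :=
    isClosed_isNowhereDense_iff_compl.mp ⟨isClosed_closure, ht.closure⟩
  have h3 : IsClosed (closure s ∪ closure t) ∧ IsNowhereDense (closure s ∪ closure t) := by
    rw [isClosed_isNowhereDense_iff_compl, Set.compl_union]
    exact ⟨h1.1.inter h2.1, h1.2.inter_of_isOpen_left h2.2 h1.1⟩
  have h4 := h3.2
  rwa [IsNowhereDense, h3.1.closure_eq, ← closure_union] at h4

theorem dense_iff_dense_tauAlpha {X : Type*} [TopologicalSpace X] (D : Set X) :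
    Dense D ↔ @Dense X (tAlpha X) D := by
  have hbasis : @TopologicalSpace.IsTopologicalBasis X (tAlpha X) (alphaOpens X) := by
    refine @TopologicalSpace.IsTopologicalBasis.mk X (tAlpha X) _ ?_ ?_ rfl
    · rintro t₁ ⟨V₁, N₁, hV₁, hN₁, rfl⟩ t₂ ⟨V₂, N₂, hV₂, hN₂, rfl⟩ x hx
      refine ⟨(V₁ ∩ V₂) \ (N₁ ∪ N₂), ⟨V₁ ∩ V₂, N₁ ∪ N₂, hV₁.inter hV₂,
        myNwdUnion hN₁ hN₂, rfl⟩, ?_, ?_⟩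
      · exact ⟨⟨hx.1.1, hx.2.1⟩, fun h => h.elim hx.1.2 hx.2.2⟩
      · rintro y ⟨⟨hy1, hy2⟩, hy3⟩
        exact ⟨⟨hy1, fun h => hy3 (Or.inl h)⟩, ⟨hy2, fun h => hy3 (Or.inr h)⟩⟩
    · apply Set.eq_univ_of_univ_subset
      intro x _
      exact ⟨Set.univ, ⟨Set.univ, ∅, isOpen_univ, isNowhereDense_empty, by simp⟩, trivial⟩
  rw [@TopologicalSpace.IsTopologicalBasis.dense_iff X (tAlpha X) _ hbasis D]
  constructor
  · rintro hD o ⟨V, N, hV, hN, rfl⟩ ⟨x, hx⟩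
    have hVc : (V \ closure N).Nonempty := by
      by_contra h
      rw [Set.not_nonempty_iff_eq_empty, Set.diff_eq_empty] at h
      have : V ⊆ interior (closure N) := interior_maximal h hV
      rw [hN] at this
      exact this hx.1
    obtain ⟨y, hy⟩ := hD.inter_open_nonempty _ (hV.sdiff isClosed_closure) hVc
    exact ⟨y, ⟨hy.1.1, fun h => hy.1.2 (subset_closure h)⟩, hy.2⟩
  · intro h
    rw [dense_iff_inter_open]
    intro U hU hUne
    exact h U ⟨U, ∅, hU, isNowhereDense_empty, by simp⟩ hUne
end

section
/- Let X be a countable regular T1 space in which every non-isolated point x has the property p⁻ (with respect to the ideal I_x of subsets of X not accumulating at x). Then X is discretely generated: for every A ⊆ X and x ∈ cl(A), there is a discrete subset E ⊆ A with x ∈ cl(E). -/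
/-- If `X` is a countable regular T1 space in which every non-isolated point is a p⁻ point
(with respect to the ideal of sets not accumulating at the point), then `X` is
discretely generated. -/
theorem discretely_generated_of_pminus {X : Type*} [TopologicalSpace X] [Countable X]
    [T1Space X] [RegularSpace X]
    (hp : ∀ x : X, ¬ IsOpen ({x} : Set X) →
      ∀ A : ℕ → Set X, (∀ n, A (n + 1) ⊆ A n) →
        (∀ n, x ∈ closure (A n \ {x})) →
        (∀ n, x ∉ closure ((A n \ A (n + 1)) \ {x})) →
        ∃ B : Set X, x ∈ closure (B \ {x}) ∧ ∀ n, (B \ A n).Finite) :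
    ∀ (A : Set X) (x : X), x ∈ closure A →
      ∃ E ⊆ A, (∀ y ∈ E, ∃ U : Set X, IsOpen U ∧ U ∩ E = {y}) ∧ x ∈ closure E := by
  intro A x hx
  by_cases hxA : x ∈ A
  · refine ⟨{x}, by simpa using hxA, ?_, subset_closure rfl⟩
    intro y hy
    exact ⟨Set.univ, isOpen_univ, by simp [Set.eq_of_mem_singleton hy]⟩
  -- `x` is not isolated
  have hniso : ¬ IsOpen ({x} : Set X) := by
    intro h
    rcases mem_closure_iff.mp hx {x} h rfl with ⟨z, hz1, hz2⟩
    rw [Set.mem_singleton_iff] at hz1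
    exact hxA (hz1 ▸ hz2)
  -- choose, for each `y`, an open set `U y` with `y ∈ U y` (when `y ≠ x`) whose
  -- closure misses `x`
  have hU : ∀ y : X, ∃ u : Set X, IsOpen u ∧ (y ≠ x → y ∈ u) ∧ x ∉ closure u := by
    intro y
    by_cases hy : y = x
    · exact ⟨∅, isOpen_empty, fun h => absurd hy h, by simp⟩
    · have hmem : ({x}ᶜ : Set X) ∈ nhds y :=
        (isOpen_compl_singleton).mem_nhds (by simpa using hy)
      rcases (closed_nhds_basis y).mem_iff.mp hmem with ⟨C, ⟨hC1, hC2⟩, hCc⟩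
      refine ⟨interior C, isOpen_interior, fun _ => mem_interior_iff_mem_nhds.mpr hC1, ?_⟩
      intro hxc
      exact hCc ((closure_minimal interior_subset hC2) hxc) rfl
  choose U hUo hUm hUx using hU
  have : Nonempty X := ⟨x⟩
  obtain ⟨f, hf⟩ := exists_surjective_nat X
  -- the decreasing sequence
  set As : ℕ → Set X := fun n => A \ ⋃ k ∈ Finset.range n, U (f k) with hAs
  have hA0 : As 0 = A := by simp [hAs]
  have hmono : ∀ n, As (n + 1) ⊆ As n := by
    intro n z hz
    refine ⟨hz.1, fun hmem => hz.2 ?_⟩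
    rcases Set.mem_iUnion₂.mp hmem with ⟨k, hk, hzk⟩
    exact Set.mem_iUnion₂.mpr ⟨k, Finset.mem_range.mpr (Nat.lt_succ_of_lt (Finset.mem_range.mp hk)), hzk⟩
  have hsub : ∀ n, As n ⊆ A := fun n z hz => hz.1
  have hxAs : ∀ n, x ∉ As n := fun n h => hxA (hsub n h)
  have hdiff : ∀ n, As n \ {x} = As n := by
    intro n
    ext z
    simp only [Set.mem_diff, Set.mem_singleton_iff]
    exact ⟨fun h => h.1, fun h => ⟨h, fun hz => hxAs n (hz ▸ h)⟩⟩
  have hsplit : ∀ n, As n ⊆ As (n + 1) ∪ U (f n) := by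
    intro n z hz
    by_cases hzU : z ∈ U (f n)
    · exact Or.inr hzU
    · refine Or.inl ⟨hz.1, fun hmem => ?_⟩
      rcases Set.mem_iUnion₂.mp hmem with ⟨k, hk, hzk⟩
      rcases Nat.lt_succ_iff_lt_or_eq.mp (Finset.mem_range.mp hk) with hk' | hk'
      · exact hz.2 (Set.mem_iUnion₂.mpr ⟨k, Finset.mem_range.mpr hk', hzk⟩)
      · exact hzU (hk' ▸ hzk)
  have hcl : ∀ n, x ∈ closure (As n) := by
    intro n
    induction n with
    | zero => rw [hA0]; exact hx
    | succ n ih =>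
      have h1 : closure (As n) ⊆ closure (As (n + 1)) ∪ closure (U (f n)) := by
        calc closure (As n) ⊆ closure (As (n + 1) ∪ U (f n)) :=
              closure_mono (hsplit n)
          _ = closure (As (n + 1)) ∪ closure (U (f n)) := closure_union
      rcases h1 ih with h | h
      · exact h
      · exact absurd h (hUx (f n))
  have hdiffU : ∀ n, As n \ As (n + 1) ⊆ U (f n) := by
    intro n z hz
    rcases hsplit n hz.1 with h | h
    · exact absurd h hz.2
    · exact h
  -- apply the p⁻ hypothesis
  obtain ⟨B, hB1, hB2⟩ := hp x hniso As hmono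
    (fun n => by rw [hdiff n]; exact hcl n)
    (fun n => by
      intro hmem
      exact hUx (f n) (closure_mono (fun z hz => hdiffU n hz.1) hmem))
  -- the discrete set
  refine ⟨(B \ {x}) ∩ A, Set.inter_subset_right, ?_, ?_⟩
  · -- discreteness
    intro y hy
    obtain ⟨hyB, hyA⟩ := hy
    have hyx : y ≠ x := fun h => hyB.2 (by simp [h])
    obtain ⟨n, hn⟩ := hf y
    -- E ∩ U (f n) is finite
    have hfin : (((B \ {x}) ∩ A) ∩ U (f n)).Finite := by
      refine (hB2 (n + 1)).subset ?_
      intro z hz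
      refine ⟨hz.1.1.1, fun hzA => ?_⟩
      exact hzA.2 (Set.mem_iUnion₂.mpr ⟨n, Finset.mem_range.mpr (Nat.lt_succ_self n), hz.2⟩)
    set F : Set X := (((B \ {x}) ∩ A) ∩ U (f n)) \ {y} with hF
    have hFfin : F.Finite := hfin.subset Set.diff_subset
    refine ⟨U (f n) ∩ Fᶜ, (hUo (f n)).inter hFfin.isClosed.isOpen_compl, ?_⟩
    ext z
    simp only [Set.mem_inter_iff, Set.mem_singleton_iff, Set.mem_compl_iff]
    constructor
    · rintro ⟨⟨hzU, hzF⟩, hzE⟩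
      by_contra hzy
      exact hzF ⟨⟨hzE, hzU⟩, hzy⟩
    · intro hzy
      have hyU : y ∈ U (f n) := by
        rw [← hn]
        exact hUm (f n) (by rw [hn]; exact hyx)
      rw [hzy]
      exact ⟨⟨hyU, fun hzF => hzF.2 rfl⟩, ⟨hyB, hyA⟩⟩
  · -- x ∈ closure E
    have hFfin : ((B \ A) \ {x}).Finite := by
      have := hB2 0
      rw [hA0] at this
      exact this.subset Set.diff_subset
    have hsub2 : B \ {x} ⊆ ((B \ {x}) ∩ A) ∪ ((B \ A) \ {x}) := by
      intro z hz
      by_cases hzA : z ∈ A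
      · exact Or.inl ⟨hz, hzA⟩
      · exact Or.inr ⟨⟨hz.1, hzA⟩, hz.2⟩
    have h1 : closure (B \ {x}) ⊆ closure ((B \ {x}) ∩ A) ∪ ((B \ A) \ {x}) := by
      calc closure (B \ {x}) ⊆ closure (((B \ {x}) ∩ A) ∪ ((B \ A) \ {x})) :=
            closure_mono hsub2
        _ = closure ((B \ {x}) ∩ A) ∪ closure ((B \ A) \ {x}) := closure_union
        _ = closure ((B \ {x}) ∩ A) ∪ ((B \ A) \ {x}) := by
            rw [hFfin.isClosed.closure_eq]
    rcases h1 hB1 with h | h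
    · exact h
    · exact absurd rfl h.2
end

section
/- Every countable space with an F_σ base is p⁺ at every non-isolated point, i.e., for every non-isolated point x, given a decreasing sequence (A_n) of subsets of X each accumulating at x, there exists A accumulating at x with A ⊆* A_n for all n. -/
/-- Every countable space with an F_σ base (a base whose set of characteristic functions
is an F_σ subset of the Cantor cube `X → Bool`) is p⁺ at every non-isolated point. -/
theorem pplus_of_Fsigma_base {X : Type*} [TopologicalSpace X] [Countable X]
    (B : Set (Set X))
    (hbase : TopologicalSpace.IsTopologicalBasis B)
    (hFs : ∃ C : ℕ → Set (X → Bool), (∀ n, IsClosed (C n)) ∧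
      (fun U : Set X => U.boolIndicator) '' B = ⋃ n, C n) :
    ∀ x : X, ¬ IsOpen ({x} : Set X) →
      ∀ A : ℕ → Set X, (∀ n, A (n + 1) ⊆ A n) →
        (∀ n, x ∈ closure (A n \ {x})) →
        ∃ A' : Set X, x ∈ closure (A' \ {x}) ∧ ∀ n, (A' \ A n).Finite := by
  intro x _hx A hdec hacc
  obtain ⟨C, hCclosed, hCB⟩ := hFs
  have hA : Antitone A := antitone_nat_of_succ_le hdec
  -- key step : finite subsets of A m \ {x} hitting every basic nbhd of x coded in C m
  have key : ∀ m : ℕ, ∃ F : Set X, F.Finite ∧ F ⊆ A m \ {x} ∧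
      ∀ f ∈ C m, f x = true → ∃ a ∈ F, f a = true := by
    intro m
    set C' : Set (X → Bool) := C m ∩ {f | f x = true} with hC'
    have hclosed : IsClosed C' :=
      (hCclosed m).inter (show IsClosed ((fun f : X → Bool => f x) ⁻¹' {true}) from (isClosed_discrete {true}).preimage (continuous_apply x))
    have hcomp : IsCompact C' := hclosed.isCompact
    have hcover : C' ⊆ ⋃ a : ↥(A m \ {x}), {g : X → Bool | g ↑a = true} := by
      intro f hf
      have hfB : f ∈ (fun U : Set X => U.boolIndicator) '' B := by
        rw [hCB]; exact Set.mem_iUnion.mpr ⟨m, hf.1⟩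
      obtain ⟨U, hUB, rfl⟩ := hfB
      have hxU : x ∈ U := (Set.mem_iff_boolIndicator U x).mpr hf.2
      obtain ⟨a, haU, haA⟩ := mem_closure_iff.mp (hacc m) U (hbase.isOpen hUB) hxU
      exact Set.mem_iUnion.mpr ⟨⟨a, haA⟩, (Set.mem_iff_boolIndicator U a).mp haU⟩
    have hopen : ∀ a : ↥(A m \ {x}), IsOpen {g : X → Bool | g ↑a = true} := by
      intro a
      exact show IsOpen ((fun g : X → Bool => g ↑a) ⁻¹' {true}) from (isOpen_discrete {true}).preimage (continuous_apply (a : X))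
    obtain ⟨t, ht⟩ := hcomp.elim_finite_subcover _ hopen hcover
    refine ⟨Subtype.val '' (t : Set ↥(A m \ {x})), t.finite_toSet.image _, ?_, ?_⟩
    · rintro _ ⟨a, -, rfl⟩; exact a.2
    · intro f hfC hfx
      have hf' : f ∈ C' := ⟨hfC, hfx⟩
      obtain ⟨a, hat, hfa⟩ := Set.mem_iUnion₂.mp (ht hf')
      exact ⟨a, ⟨a, hat, rfl⟩, hfa⟩
  choose F hFfin hFsub hFcover using key
  refine ⟨⋃ m, F m, ?_, ?_⟩
  · rw [mem_closure_iff]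
    intro o ho hxo
    obtain ⟨U, hUB, hxU, hUo⟩ := hbase.exists_subset_of_mem_open hxo ho
    have hUC : U.boolIndicator ∈ ⋃ n, C n := by
      rw [← hCB]; exact ⟨U, hUB, rfl⟩
    obtain ⟨m, hm⟩ := Set.mem_iUnion.mp hUC
    obtain ⟨a, haF, hfa⟩ := hFcover m _ hm ((Set.mem_iff_boolIndicator U x).mp hxU)
    have haU : a ∈ U := (Set.mem_iff_boolIndicator U a).mpr hfa
    refine ⟨a, hUo haU, Set.mem_iUnion.mpr ⟨m, haF⟩, ?_⟩
    exact (hFsub m haF).2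
  · intro n
    apply Set.Finite.subset ((Set.finite_Iio n).biUnion fun m _ => hFfin m)
    rintro a ⟨haU, haA⟩
    obtain ⟨m, hm⟩ := Set.mem_iUnion.mp haU
    refine Set.mem_biUnion ?_ hm
    by_contra h
    simp only [Set.mem_Iio] at h
    exact haA (hA (le_of_not_gt h) (hFsub m hm).1)
end

section
/- Let X be a σ-compact topological space and W a countable collection of clopen subsets of X. Then W, as a subspace of 2^X with the product topology, has an F_σ base. -/
open Set TopologicalSpace Topology Filter

private def basAux {X : Type*} (W : Set (Set X)) (k : ℕ) (x : Fin k → X) (b : Fin k → Bool) :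
    Set (↥((fun U : Set X => U.boolIndicator) '' W)) :=
  {f | ∀ j, (f : X → Bool) (x j) = b j}

private noncomputable def phiAux {X : Type*} (W : Set (Set X)) (k : ℕ)
    (p : (Fin k → X) × (Fin k → Bool)) : (↥((fun U : Set X => U.boolIndicator) '' W)) → Bool :=
  (basAux W k p.1 p.2).boolIndicator

/-- Let `X` be σ-compact and `W` a countable family of clopen subsets of `X`.  Then `W`,
viewed (via characteristic functions) as a subspace of the Cantor cube `X → Bool`, has an
F_σ base: a base of its topology whose set of characteristic functions is an F_σ subset of
the Cantor cube over that subspace. -/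
theorem Fsigma_base_of_clopen_family {X : Type*} [TopologicalSpace X] [SigmaCompactSpace X]
    (W : Set (Set X)) (hWc : W.Countable) (hclopen : ∀ U ∈ W, IsClopen U) :
    ∃ B : Set (Set (↥((fun U : Set X => U.boolIndicator) '' W))),
      TopologicalSpace.IsTopologicalBasis B ∧
      ∃ C : ℕ → Set ((↥((fun U : Set X => U.boolIndicator) '' W)) → Bool),
        (∀ n, IsClosed (C n)) ∧
        (fun S : Set (↥((fun U : Set X => U.boolIndicator) '' W)) => S.boolIndicator) '' B
          = ⋃ n, C n := by
  classical
  have hcont : ∀ f : ↥((fun U : Set X => U.boolIndicator) '' W), Continuous (f : X → Bool) := by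
    rintro ⟨f, U, hU, rfl⟩
    exact (continuous_boolIndicator_iff_isClopen U).2 (hclopen U hU)
  refine ⟨{S | ∃ k x b, S = basAux W k x b}, ?_, ?_⟩
  · apply isTopologicalBasis_of_isOpen_of_nhds
    · rintro S ⟨k, x, b, rfl⟩
      have h : basAux W k x b
          = ⋂ j, (fun f : ↥((fun U : Set X => U.boolIndicator) '' W) =>
              (f : X → Bool) (x j)) ⁻¹' {b j} := by
        ext f; simp [basAux]
      rw [h]
      exact isOpen_iInter_of_finite fun j =>
        ((continuous_apply (x j)).comp continuous_subtype_val).isOpen_preimage _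
          (isOpen_discrete _)
    · intro a u hau hu
      have hmem : u ∈ 𝓝 a := hu.mem_nhds hau
      rw [nhds_subtype] at hmem
      obtain ⟨t, ht, hts⟩ := hmem
      rw [nhds_pi, Filter.mem_pi] at ht
      obtain ⟨I, hIfin, s, hs, hsub⟩ := ht
      refine ⟨basAux W hIfin.toFinset.card
          (fun j => (hIfin.toFinset.equivFin.symm j : X))
          (fun j => (a : X → Bool) (hIfin.toFinset.equivFin.symm j : X)),
        ⟨_, _, _, rfl⟩, fun j => rfl, ?_⟩
      intro f hf
      apply hts
      show (f : X → Bool) ∈ t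
      apply hsub
      intro x hxI
      have hxF : x ∈ hIfin.toFinset := hIfin.mem_toFinset.2 hxI
      have h2 := hf (hIfin.toFinset.equivFin ⟨x, hxF⟩)
      simp only [Equiv.symm_apply_apply] at h2
      rw [h2]
      exact mem_of_mem_nhds (hs x)
  · refine ⟨fun m => phiAux W m.unpair.2 ''
        ((Set.univ.pi fun _ : Fin m.unpair.2 => compactCovering X m.unpair.1) ×ˢ Set.univ),
      fun m => ?_, ?_⟩
    · -- closedness
      have hPhiCont : Continuous (phiAux W m.unpair.2) := by
        apply continuous_pi
        intro f
        have key : (fun p : (Fin m.unpair.2 → X) × (Fin m.unpair.2 → Bool) => phiAux W m.unpair.2 p f)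
            = Set.boolIndicator {p : (Fin m.unpair.2 → X) × (Fin m.unpair.2 → Bool) |
                ∀ j, (f : X → Bool) (p.1 j) = p.2 j} := rfl
        rw [key]
        apply (continuous_boolIndicator_iff_isClopen _).2
        have h3 : {p : (Fin m.unpair.2 → X) × (Fin m.unpair.2 → Bool) |
              ∀ j, (f : X → Bool) (p.1 j) = p.2 j}
            = ⋂ j, (fun p : (Fin m.unpair.2 → X) × (Fin m.unpair.2 → Bool) =>
                ((f : X → Bool) (p.1 j), p.2 j)) ⁻¹' {q : Bool × Bool | q.1 = q.2} := by
          ext p; simp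
        rw [h3]
        have hcj : ∀ j, Continuous (fun p : (Fin m.unpair.2 → X) × (Fin m.unpair.2 → Bool) =>
            ((f : X → Bool) (p.1 j), p.2 j)) := fun j =>
          ((hcont f).comp ((continuous_apply j).comp continuous_fst)).prodMk
            ((continuous_apply j).comp continuous_snd)
        exact ⟨isClosed_iInter fun j => (isClopen_discrete _).1.preimage (hcj j),
          isOpen_iInter_of_finite fun j => (isClopen_discrete _).2.preimage (hcj j)⟩
      exact (((isCompact_univ_pi fun _ => isCompact_compactCovering X m.unpair.1).prod
        isCompact_univ).image hPhiCont).isClosed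
    · -- image equality
      ext χ
      simp only [mem_image, mem_iUnion]
      constructor
      · rintro ⟨S, ⟨k, x, b, rfl⟩, rfl⟩
        have hex : ∃ n, ∀ j, x j ∈ compactCovering X n := by
          choose nj hnj using fun j => exists_mem_compactCovering (x j)
          exact ⟨Finset.univ.sup nj, fun j =>
            compactCovering_subset X (Finset.le_sup (Finset.mem_univ j)) (hnj j)⟩
        obtain ⟨n, hn⟩ := hex
        refine ⟨Nat.pair n k, ?_⟩
        have hup : (Nat.pair n k).unpair = (n, k) := Nat.unpair_pair n k
        rw [hup]
        exact ⟨(x, b), ⟨fun j _ => hn j, trivial⟩, rfl⟩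
      · rintro ⟨m, p, _, rfl⟩
        exact ⟨basAux W m.unpair.2 p.1 p.2, ⟨_, _, _, rfl⟩, rfl⟩
end

section
/- There is a pairwise disjoint family {A_n : n ∈ ℕ} of finite subsets of 𝕏 (the family of finite unions of sets [s]×{n} with s ∈ 2^{<ω}, n ∈ ℕ, including ∅) such that for every infinite E ⊆ ℕ, the union ⋃_{k ∈ E} A_k is dense in 2^{2^ℕ × ℕ} with the product topology. -/
/-- Points of the space `2^ℕ × ℕ`. -/
abbrev Pt : Type := (ℕ → Bool) × ℕ

/-- `𝕏`: the family of finite unions of basic clopen rectangles `[s] × {m}`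
(including `∅`), viewed inside the cube `2^(2^ℕ × ℕ)` as `Pt → Bool`.
A piece is coded by `(s, len, m)`: the rectangle `[s ↾ len] × {m}`. -/
def XX : Set (Pt → Bool) :=
  {θ | ∃ L : List ((ℕ → Bool) × ℕ × ℕ),
    ∀ p : Pt, θ p = true ↔ ∃ q ∈ L, p.2 = q.2.2 ∧ ∀ i < q.2.1, p.1 i = q.1 i}

/-- An ideal on ℕ containing all finite sets. -/
def IsIdeal (I : Set (Set ℕ)) : Prop :=
  (∀ A ∈ I, ∀ B, B ⊆ A → B ∈ I) ∧
  (∀ A ∈ I, ∀ B ∈ I, A ∪ B ∈ I) ∧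
  (∀ A : Set ℕ, A.Finite → A ∈ I)

/-- The topology `ρ_I` on the cube `2^(2^ℕ × ℕ)`, generated by the sets
`(α,p)⁺` and `(α,p)⁻` for `α` the characteristic function of a member of `I`. -/
def rho (I : Set (Set ℕ)) : TopologicalSpace (Pt → Bool) :=
  TopologicalSpace.generateFrom
    {S | ∃ A ∈ I, ∃ p : ℕ,
      S = {θ | θ (A.boolIndicator, p) = true} ∨ S = {θ | θ (A.boolIndicator, p) = false}}

/-- The subspace topology induced by `ρ_I` on a subset of the cube. -/
def subTop (S : Set (Pt → Bool)) (I : Set (Set ℕ)) : TopologicalSpace {θ // θ ∈ S} :=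
  TopologicalSpace.induced Subtype.val (rho I)

/-- `ψ_n = φ_n ∪ ({α : α(n) = 1} × ℕ)`, for an enumeration `φ` of `𝕏`. -/
def psi (φ : ℕ → Pt → Bool) (n : ℕ) : Pt → Bool := fun p => φ n p || p.1 n

/-- `𝕐 = {ψ_n : n ∈ ℕ}`. -/
def YY (φ : ℕ → Pt → Bool) : Set (Pt → Bool) := Set.range (psi φ)

/-- `K* = {F ⊆ ℕ : {φ_n : n ∈ F} is nowhere dense in 𝕏(K)}`. -/
def starIdeal (φ : ℕ → Pt → Bool) (K : Set (Set ℕ)) : Set (Set ℕ) :=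
  {F | @IsNowhereDense _ (subTop XX K) {θ : {θ // θ ∈ XX} | ∃ n ∈ F, φ n = θ.1}}

def theta (n : ℕ) (c : ((Fin n → Bool) × Fin n) → Bool) : Pt → Bool :=
  fun p => if p.2 = n then true
    else if h : p.2 < n then c (fun i => p.1 i.1, ⟨p.2, h⟩) else false

lemma theta_mem_XX (n : ℕ) (c : ((Fin n → Bool) × Fin n) → Bool) : theta n c ∈ XX := by
  classical
  refine ⟨((Finset.univ.filter (fun q => c q = true)).toList.map
      (fun q => ((fun i => if h : i < n then q.1 ⟨i, h⟩ else false), n, (q.2 : ℕ))))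
      ++ [((fun _ => false), 0, n)], ?_⟩
  rintro ⟨α, m⟩
  simp only [theta, List.mem_append, List.mem_map, List.mem_singleton,
    Finset.mem_toList, Finset.mem_filter, Finset.mem_univ, true_and]
  constructor
  · intro h
    by_cases hm : m = n
    · exact ⟨_, Or.inr rfl, hm, by intro i hi; exact absurd hi (Nat.not_lt_zero i)⟩
    · rw [if_neg hm] at h
      by_cases hlt : m < n
      · rw [dif_pos hlt] at h
        refine ⟨_, Or.inl ⟨(fun i => α i.1, ⟨m, hlt⟩), h, rfl⟩, rfl, ?_⟩
        intro i hi
        simp [dif_pos hi]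
      · rw [dif_neg hlt] at h; exact absurd h (by simp)
  · rintro ⟨q, hq, hm, hpre⟩
    rcases hq with ⟨q0, hc, rfl⟩ | rfl
    · simp only at hm hpre
      have hlt : m < n := hm ▸ q0.2.2
      have hne : m ≠ n := Nat.ne_of_lt hlt
      rw [if_neg hne, dif_pos hlt]
      have h1 : (fun i : Fin n => α i.1) = q0.1 := by
        funext i
        have := hpre i.1 i.2
        simpa [dif_pos i.2] using this
      have h2 : (⟨m, hlt⟩ : Fin n) = q0.2 := by
        apply Fin.ext; exact hm
      rw [h1, h2]
      exact hc
    · simp only at hm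
      rw [if_pos hm]

lemma theta_self (n : ℕ) (c) (α : ℕ → Bool) : theta n c (α, n) = true := by
  simp [theta]

lemma theta_gt (n : ℕ) (c) (α : ℕ → Bool) (m : ℕ) (h : n < m) :
    theta n c (α, m) = false := by
  simp only [theta]
  rw [if_neg (by omega), dif_neg (by omega)]


/-- There is a pairwise disjoint family of finite subsets of `𝕏` such that the union over
any infinite index set is dense in the cube `2^(2^ℕ × ℕ)` with the product topology. -/
theorem exists_disjoint_finite_family_dense :
    ∃ A : ℕ → Set (Pt → Bool),
      (∀ n, A n ⊆ XX) ∧ (∀ n, (A n).Finite) ∧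
      (∀ m n, m ≠ n → Disjoint (A m) (A n)) ∧
      ∀ E : Set ℕ, E.Infinite → Dense (⋃ k ∈ E, A k) := by
  classical
  refine ⟨fun n => Set.range (theta n), ?_, ?_, ?_, ?_⟩
  · rintro n _ ⟨c, rfl⟩; exact theta_mem_XX n c
  · intro n; exact (Set.finite_range _)
  · intro m n hmn
    rw [Set.disjoint_left]
    rintro θ ⟨c, rfl⟩ ⟨c', hc'⟩
    rcases Nat.lt_or_ge m n with h | h
    · have h1 := theta_self n c' (fun _ => false)
      rw [hc', theta_gt m c _ n h] at h1
      exact absurd h1 (by simp)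
    · have h' : n < m := by omega
      have h1 := theta_self m c (fun _ => false)
      rw [← hc', theta_gt n c' _ m h'] at h1
      exact absurd h1 (by simp)
  · intro E hE
    rw [dense_iff_inter_open]
    intro U hU ⟨θ0, hθ0⟩
    obtain ⟨I, u, hu, hI⟩ := isOpen_pi_iff.mp hU θ0 hθ0
    -- choose k ∈ E large enough
    obtain ⟨M, hM1, hM2⟩ : ∃ M, (∀ p ∈ I, p.2 < M) ∧
        ∀ p ∈ I, ∀ q ∈ I, p.1 ≠ q.1 → ∃ i < M, p.1 i ≠ q.1 i := by
      refine ⟨(I.sup fun p => p.2) + 1 + ((I ×ˢ I).sup fun pq =>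
        if h : pq.1.1 ≠ pq.2.1 then Classical.choose (Function.ne_iff.mp h) + 1 else 0),
        ?_, ?_⟩
      · intro p hp
        have h3 : p.2 ≤ I.sup fun q => q.2 := Finset.le_sup hp
        omega
      · intro p hp q hq hne
        have hmem : (p, q) ∈ I ×ˢ I := Finset.mem_product.mpr ⟨hp, hq⟩
        have h4 := Finset.le_sup (f := fun pq : Pt × Pt =>
          if h : pq.1.1 ≠ pq.2.1 then Classical.choose (Function.ne_iff.mp h) + 1 else 0) hmem
        simp only at h4
        rw [dif_pos hne] at h4
        exact ⟨Classical.choose (Function.ne_iff.mp hne), by omega,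
          Classical.choose_spec (Function.ne_iff.mp hne)⟩
    obtain ⟨k, hkE, hkN⟩ : ∃ k ∈ E, M ≤ k := by
      by_contra hcon
      push_neg at hcon
      exact hE (Set.Finite.subset (Set.finite_Iio M) (fun x hx => hcon x hx))
    have hk2 : ∀ p ∈ I, p.2 < k := fun p hp => lt_of_lt_of_le (hM1 p hp) hkN
    have hsep : ∀ p ∈ I, ∀ q ∈ I, p.1 ≠ q.1 → ∃ i < k, p.1 i ≠ q.1 i := by
      intro p hp q hq hne
      obtain ⟨i, hi1, hi2⟩ := hM2 p hp q hq hne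
      exact ⟨i, by omega, hi2⟩
    set c : ((Fin k → Bool) × Fin k) → Bool := fun q =>
      if (∃ p ∈ I, p.2 = (q.2 : ℕ) ∧ (∀ i : Fin k, p.1 i.1 = q.1 i) ∧ θ0 p = true)
      then true else false with hc
    have hciff : ∀ q, c q = true ↔
        (∃ p ∈ I, p.2 = (q.2 : ℕ) ∧ (∀ i : Fin k, p.1 i.1 = q.1 i) ∧ θ0 p = true) := by
      intro q
      by_cases h : (∃ p ∈ I, p.2 = (q.2 : ℕ) ∧ (∀ i : Fin k, p.1 i.1 = q.1 i) ∧ θ0 p = true)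
      · rw [hc]; simp only []; rw [if_pos h]; exact iff_of_true rfl h
      · rw [hc]; simp only []; rw [if_neg h]; exact iff_of_false (by simp) h
    refine ⟨theta k c, ?_, Set.mem_biUnion hkE ⟨c, rfl⟩⟩
    apply hI
    intro p hp
    have hval : theta k c p = θ0 p := by
      obtain ⟨α, m⟩ := p
      have hmk : m < k := hk2 _ hp
      have : theta k c (α, m) = c (fun i => α i.1, ⟨m, hmk⟩) := by
        simp only [theta]
        rw [if_neg (Nat.ne_of_lt hmk), dif_pos hmk]
      rw [this]
      have hpI : (α, m) ∈ I := hp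
      rcases Bool.eq_false_or_eq_true (θ0 (α, m)) with h0 | h0
      · rw [h0]
        rw [hciff]
        exact ⟨(α, m), hpI, rfl, fun i => rfl, h0⟩
      · rw [h0]
        rcases Bool.eq_false_or_eq_true (c (fun i => α i.1, ⟨m, hmk⟩)) with h1 | h1
        · exfalso
          obtain ⟨q, hq, hq2, hqpre, hqt⟩ := (hciff _).mp h1
          by_cases hqα : q.1 = α
          · have hqe : q = (α, m) := Prod.ext hqα hq2
            rw [hqe, h0] at hqt; simp at hqt
          · obtain ⟨i, hik, hi⟩ := hsep q hq (α, m) hpI hqα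
            exact hi (by simpa using hqpre ⟨i, hik⟩)
        · exact h1
    rw [hval]
    exact (hu p hp).2
end

section
/- Let I be an ideal on ℕ containing all finite sets, and ρ_I the topology on 2^{2^ℕ×ℕ} generated by the sets (α,p)⁺ = {θ : θ(α,p)=1} and (α,p)⁻ = {θ : θ(α,p)=0} for α ∈ I (where α is identified with its characteristic function in 2^ℕ) and p ∈ ℕ. Then 𝕏 is dense in (2^{2^ℕ×ℕ}, ρ_I). -/
private lemma le_foldr_max (x : ℕ) (l : List ℕ) (hx : x ∈ l) : x ≤ l.foldr max 0 := by
  induction l with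
  | nil => simp at hx
  | cons a t ih =>
    rcases List.mem_cons.1 hx with rfl | h
    · exact le_max_left _ _
    · exact (ih h).trans (le_max_right _ _)

lemma key_approx (l : List Pt) (θ : Pt → Bool) :
    ∃ θ' ∈ XX, ∀ p ∈ l, θ' p = θ p := by
  classical
  set lpos := l.filter (fun p => θ p) with hlpos
  set lneg := l.filter (fun p => !θ p) with hlneg
  set N : Pt → ℕ := fun q => 1 +
    (lneg.map (fun r => if h : ∃ i, q.1 i ≠ r.1 i then Nat.find h else 0)).foldr max 0 with hN
  set L := lpos.map (fun q => (q.1, N q, q.2)) with hL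
  set θ' : Pt → Bool := fun p =>
    L.any (fun q => decide (p.2 = q.2.2) && decide (∀ i < q.2.1, p.1 i = q.1 i)) with hθ'
  have hmem : θ' ∈ XX := by
    refine ⟨L, fun p => ?_⟩
    simp [hθ', List.any_eq_true, Bool.and_eq_true, decide_eq_true_iff]
  refine ⟨θ', hmem, fun p hp => ?_⟩
  cases hb : θ p with
  | true =>
    have hppos : p ∈ lpos := List.mem_filter.2 ⟨hp, by simp [hb]⟩
    simp only [hθ', List.any_eq_true]
    refine ⟨(p.1, N p, p.2), List.mem_map.2 ⟨p, hppos, rfl⟩, ?_⟩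
    simp
  | false =>
    have hpneg : p ∈ lneg := List.mem_filter.2 ⟨hp, by simp [hb]⟩
    by_contra hcon
    have : θ' p = true := by
      cases h : θ' p
      · exact absurd h hcon
      · rfl
    simp only [hθ', List.any_eq_true, Bool.and_eq_true, decide_eq_true_iff] at this
    obtain ⟨q', hq'L, h2, h3⟩ := this
    obtain ⟨q, hqpos, rfl⟩ := List.mem_map.1 hq'L
    have hθq : θ q = true := by simpa using (List.mem_filter.1 hqpos).2
    have hne : ∃ i, q.1 i ≠ p.1 i := by
      by_contra hno
      push_neg at hno
      have : q = p := Prod.ext (funext hno) h2.symm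
      rw [this, hb] at hθq; exact Bool.false_ne_true hθq
    set i₀ := Nat.find hne with hi₀
    have hspec : q.1 i₀ ≠ p.1 i₀ := Nat.find_spec hne
    have hxmem : (if h : ∃ i, q.1 i ≠ p.1 i then Nat.find h else 0) ∈
        (lneg.map (fun r => if h : ∃ i, q.1 i ≠ r.1 i then Nat.find h else 0)) :=
      List.mem_map.2 ⟨p, hpneg, rfl⟩
    rw [dif_pos hne] at hxmem
    have hlt : i₀ < N q := by
      have := le_foldr_max _ _ hxmem
      simp only [hN]
      omega
    exact hspec (h3 i₀ hlt).symm

/-- `𝕏` is dense in `(2^(2^ℕ×ℕ), ρ_I)`. -/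
theorem XX_dense_rho (I : Set (Set ℕ)) (hI : IsIdeal I) :
    @Dense _ (rho I) XX := by
  classical
  letI : TopologicalSpace (Pt → Bool) := rho I
  refine dense_iff_inter_open.2 ?_
  rintro U hU ⟨θ, hθ⟩
  have hbasis := @TopologicalSpace.isTopologicalBasis_of_subbasis _ (rho I)
    {S | ∃ A ∈ I, ∃ p : ℕ,
      S = {θ | θ (A.boolIndicator, p) = true} ∨ S = {θ | θ (A.boolIndicator, p) = false}} rfl
  obtain ⟨v, hv, hθv, hvU⟩ := hbasis.exists_subset_of_mem_open hθ hU
  obtain ⟨F, ⟨hFfin, hFsub⟩, rfl⟩ := hv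
  -- each s ∈ F is determined by a point and a bool
  have hpt : ∀ s : Set (Pt → Bool), s ∈ F → ∃ pt : Pt,
      s = {η | η pt = true} ∨ s = {η | η pt = false} := by
    intro s hs
    obtain ⟨A, -, p, h⟩ := hFsub hs
    exact ⟨(A.boolIndicator, p), h⟩
  choose! g hg using hpt
  -- list of all constraint points
  set lF := hFfin.toFinset.toList with hlF
  set l := lF.map g with hl
  obtain ⟨θ', hθ'X, hθ'eq⟩ := key_approx l θ
  refine ⟨θ', hvU ?_, hθ'X⟩
  intro s hs
  have hgs : g s ∈ l := List.mem_map.2 ⟨s, by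
    rw [hlF, Finset.mem_toList, Set.Finite.mem_toFinset]; exact hs, rfl⟩
  have heq : θ' (g s) = θ (g s) := hθ'eq _ hgs
  have hθs := hθv s hs
  rcases hg s hs with h | h <;> rw [h] at hθs ⊢ <;>
    simpa [heq] using hθs
end

section
/- Let I be an ideal on ℕ and let V be a finite intersection of subbasic ρ_I-open sets of the forms (α_i, p_i)⁺ and (β_j, q_j)⁻ with all α_i, β_j ∈ I. Then the symmetric difference {n : φ_n ∈ V} △ {n : ψ_n ∈ V} belongs to I. -/
lemma biUnion_mem_ideal (I : Set (Set ℕ)) (hI : IsIdeal I) (S : Set (Set ℕ × ℕ))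
    (hS : S.Finite) (h : ∀ q ∈ S, q.1 ∈ I) : (⋃ q ∈ S, q.1) ∈ I := by
  revert h
  refine Set.Finite.induction_on (motive := fun S _ => (∀ q ∈ S, q.1 ∈ I) → (⋃ q ∈ S, q.1) ∈ I)
    S hS (fun _ => by simpa using hI.2.2 ∅ Set.finite_empty) ?_
  intro a s _ _ ih h
  rw [Set.biUnion_insert]
  exact hI.2.1 _ (h _ (Set.mem_insert _ _)) _
    (ih (fun q hq => h q (Set.mem_insert_of_mem _ hq)))

/-- For a basic `ρ_I`-open set `V` (a finite intersection of subbasic sets with parameters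
in `I`), the symmetric difference `{n : φ_n ∈ V} △ {n : ψ_n ∈ V}` belongs to `I`. -/
theorem symmDiff_mem_ideal (I : Set (Set ℕ)) (hI : IsIdeal I)
    (φ : ℕ → Pt → Bool) (hinj : Function.Injective φ) (hran : Set.range φ = XX)
    (V : Set (Pt → Bool)) (Fp Fm : Set (Set ℕ × ℕ)) (hFp : Fp.Finite) (hFm : Fm.Finite)
    (hFpI : ∀ q ∈ Fp, q.1 ∈ I) (hFmI : ∀ q ∈ Fm, q.1 ∈ I)
    (hV : V = {θ | (∀ q ∈ Fp, θ (q.1.boolIndicator, q.2) = true) ∧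
                   (∀ q ∈ Fm, θ (q.1.boolIndicator, q.2) = false)}) :
    symmDiff {n | φ n ∈ V} {n | psi φ n ∈ V} ∈ I := by
  subst hV
  have hfin : (Fp ∪ Fm).Finite := hFp.union hFm
  have hall : ∀ q ∈ Fp ∪ Fm, q.1 ∈ I := by
    intro q hq; rcases hq with h | h
    exacts [hFpI q h, hFmI q h]
  have hUI : (⋃ q ∈ Fp ∪ Fm, q.1) ∈ I := biUnion_mem_ideal I hI _ hfin hall
  refine hI.1 _ hUI _ ?_
  intro n hn
  by_contra hnU
  have hfalse : ∀ q ∈ Fp ∪ Fm, (q.1.boolIndicator) n = false := by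
    intro q hq
    have : n ∉ q.1 := fun hmem => hnU (Set.mem_biUnion hq hmem)
    simpa [Set.boolIndicator] using this
  have key : ∀ q ∈ Fp ∪ Fm, ∀ p : ℕ,
      psi φ n (q.1.boolIndicator, p) = φ n (q.1.boolIndicator, p) := by
    intro q hq p
    simp [psi, hfalse q hq]
  rw [Set.mem_symmDiff] at hn
  rcases hn with ⟨hn1, hn2⟩ | ⟨hn1, hn2⟩
  · exact hn2 ⟨fun q hq => (key q (Or.inl hq) q.2).trans (hn1.1 q hq),
      fun q hq => (key q (Or.inr hq) q.2).trans (hn1.2 q hq)⟩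
  · exact hn2 ⟨fun q hq => (key q (Or.inl hq) q.2).symm.trans (hn1.1 q hq),
      fun q hq => (key q (Or.inr hq) q.2).symm.trans (hn1.2 q hq)⟩
end

section
/- For any ideal I on ℕ, every element of 𝕏(I) is the limit of a non-trivial convergent sequence; in particular, the sequence x_n = [α_n ↾ (n+1)] × {0}, where (α_n) is a sequence in 2^ℕ with α_k ↾ (k+1) ≠ α_l ↾ (k+1) for k < l, converges to ∅ in 𝕏(I). -/
/- ---------- Auxiliary material ---------- -/

/-- Extend a finite bitstring by `false`. -/
def ext' (N : ℕ) (t : Fin N → Bool) : ℕ → Bool := fun i => if h : i < N then t ⟨i, h⟩ else false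

lemma le_foldr_max_s15 (L : List ℕ) (a : ℕ) (ha : a ∈ L) : a ≤ L.foldr max 0 := by
  induction L with
  | nil => simp at ha
  | cons b t ih =>
    rcases List.mem_cons.1 ha with rfl | h
    · exact le_max_left _ _
    · exact le_trans (ih h) (le_max_right _ _)

/-- A function belongs to `𝕏` as soon as it has bounded support in the second
coordinate and depends only on finitely many bits of the first coordinate. -/
lemma mem_XX_of (f : Pt → Bool) (N M : ℕ)
    (hM : ∀ p : Pt, f p = true → p.2 < M)
    (hN : ∀ p q : Pt, p.2 = q.2 → (∀ i < N, p.1 i = q.1 i) → f p = f q) :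
    f ∈ XX := by
  classical
  refine ⟨(List.range M).flatMap fun m =>
    (((Finset.univ : Finset (Fin N → Bool)).toList.filter
      (fun t => f (ext' N t, m))).map (fun t => (ext' N t, N, m))), ?_⟩
  intro p
  constructor
  · intro hp
    refine ⟨(ext' N (fun j => p.1 j.1), N, p.2), ?_, rfl, ?_⟩
    · have hfp : f (ext' N (fun j => p.1 j.1), p.2) = true := by
        rw [hN (ext' N (fun j => p.1 j.1), p.2) p rfl ?_]
        · exact hp
        · intro i hi; simp [ext', hi]
      simp only [List.mem_flatMap, List.mem_map, List.mem_filter, List.mem_range]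
      exact ⟨p.2, hM p hp, ⟨fun j => p.1 j.1, ⟨by simp, by simpa using hfp⟩, rfl⟩⟩
    · intro i hi; simp [ext', hi]
  · rintro ⟨q, hq, hp2, hagree⟩
    simp only [List.mem_flatMap, List.mem_map, List.mem_filter, List.mem_range] at hq
    obtain ⟨m, hm, t, ⟨-, hft⟩, rfl⟩ := hq
    simp only at hp2 hagree
    rw [hN p (ext' N t, m) hp2 hagree]
    simpa using hft

lemma tendsto_generateFrom' {ι : Type*} {X : Type*} {G : Set (Set X)} {y : ι → X}
    {l : Filter ι} {θ : X}
    (h : ∀ s ∈ G, θ ∈ s → ∀ᶠ n in l, y n ∈ s) :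
    Filter.Tendsto y l (@nhds _ (TopologicalSpace.generateFrom G) θ) := by
  rw [TopologicalSpace.nhds_generateFrom]
  simp only [Filter.tendsto_iInf, Filter.tendsto_principal]
  rintro s ⟨hθ, hG⟩
  exact h s hG hθ

/-- At every fixed point, the sequence `x_n` is eventually `false`. -/
lemma xev (α : ℕ → ℕ → Bool) (hα : ∀ k l, k < l → ∃ i ≤ k, α k i ≠ α l i) (pt : Pt) :
    ∀ᶠ n in Filter.atTop, decide (pt.2 = 0 ∧ ∀ i ≤ n, pt.1 i = α n i) = false := by
  by_cases h : ∃ n, pt.2 = 0 ∧ ∀ i ≤ n, pt.1 i = α n i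
  · obtain ⟨n₀, h0⟩ := h
    refine Filter.eventually_atTop.2 ⟨n₀ + 1, fun n hn => ?_⟩
    simp only [decide_eq_false_iff_not, not_and]
    intro _ hall
    obtain ⟨i, hi, hne⟩ := hα n₀ n (by omega)
    exact hne ((h0.2 i hi).symm.trans (hall i (le_trans hi (by omega)))) |>.elim
  · filter_upwards with n
    simp only [decide_eq_false_iff_not]
    exact fun hc => h ⟨n, hc⟩

/-- The sequence `x_n` itself: each term belongs to `𝕏`. -/
lemma x_mem_XX (α : ℕ → ℕ → Bool) (n : ℕ) :
    (fun p : Pt => decide (p.2 = 0 ∧ ∀ i ≤ n, p.1 i = α n i)) ∈ XX := by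
  refine mem_XX_of _ (n + 1) 1 ?_ ?_
  · intro p hp
    simp only [decide_eq_true_eq] at hp
    omega
  · intro p q h2 hagree
    simp only [decide_eq_decide, h2]
    constructor
    · rintro ⟨h0, hall⟩
      exact ⟨h0, fun i hi => (hagree i (by omega)).symm.trans (hall i hi)⟩
    · rintro ⟨h0, hall⟩
      exact ⟨h0, fun i hi => (hagree i (by omega)).trans (hall i hi)⟩

/-- Every element of `𝕏(I)` is the limit of a non-trivial convergent sequence; in
particular `x_n = [α_n ↾ (n+1)] × {0}` converges to `∅` whenever
`α_k ↾ (k+1) ≠ α_l ↾ (k+1)` for `k < l`. -/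
theorem XX_nontrivial_convergent_sequences (I : Set (Set ℕ)) (hI : IsIdeal I)
    (α : ℕ → ℕ → Bool) (hα : ∀ k l, k < l → ∃ i ≤ k, α k i ≠ α l i) :
    (∀ θ ∈ XX, ∃ y : ℕ → (Pt → Bool), (∀ n, y n ∈ XX) ∧ (∀ n, y n ≠ θ) ∧
      Filter.Tendsto y Filter.atTop (@nhds _ (rho I) θ)) ∧
    (∀ n, (fun p : Pt => decide (p.2 = 0 ∧ ∀ i ≤ n, p.1 i = α n i)) ∈ XX) ∧
    Filter.Tendsto (fun n : ℕ => fun p : Pt => decide (p.2 = 0 ∧ ∀ i ≤ n, p.1 i = α n i))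
      Filter.atTop (@nhds _ (rho I) (fun _ => false)) := by
  classical
  set x : ℕ → Pt → Bool := fun n p => decide (p.2 = 0 ∧ ∀ i ≤ n, p.1 i = α n i) with hx
  refine ⟨?_, fun n => x_mem_XX α n, ?_⟩
  · -- general statement: symmetric difference with `x n`
    intro θ hθ
    obtain ⟨L, hL⟩ := hθ
    set N : ℕ := (L.map fun q => q.2.1).foldr max 0 with hN
    set M : ℕ := (L.map fun q => q.2.2).foldr max 0 + 1 with hM
    -- θ is determined by the first N bits and the level, and vanishes above level M
    have hθM : ∀ p : Pt, θ p = true → p.2 < M := by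
      intro p hp
      obtain ⟨q, hq, hp2, -⟩ := (hL p).1 hp
      have : q.2.2 ≤ (L.map fun q => q.2.2).foldr max 0 :=
        le_foldr_max_s15 _ _ (List.mem_map_of_mem (f := fun q : (ℕ → Bool) × ℕ × ℕ => q.2.2) hq)
      omega
    have hθN : ∀ p q : Pt, p.2 = q.2 → (∀ i < N, p.1 i = q.1 i) → θ p = θ q := by
      intro p q h2 hagree
      have key : ∀ r s : Pt, r.2 = s.2 → (∀ i < N, r.1 i = s.1 i) → θ s = true → θ r = true := by
        intro r s hr2 hragree hs
        obtain ⟨c, hc, hs2, hall⟩ := (hL s).1 hs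
        have hlen : c.2.1 ≤ N := le_foldr_max_s15 _ _ (List.mem_map_of_mem (f := fun q : (ℕ → Bool) × ℕ × ℕ => q.2.1) hc)
        exact (hL r).2 ⟨c, hc, hr2.trans hs2,
          fun i hi => (hragree i (lt_of_lt_of_le hi hlen)).trans (hall i hi)⟩
      have k1 := key p q h2 hagree
      have k2 := key q p h2.symm (fun i hi => (hagree i hi).symm)
      cases hbp : θ p <;> cases hbq : θ q
      · rfl
      · exact absurd (k1 hbq) (by rw [hbp]; simp)
      · exact absurd (k2 hbp) (by rw [hbq]; simp)
      · rfl
    refine ⟨fun n p => xor (θ p) (x n p), ?_, ?_, ?_⟩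
    · intro n
      refine mem_XX_of _ (max N (n + 1)) (max M 1) ?_ ?_
      · intro p hp
        have hp' : xor (θ p) (x n p) = true := hp
        cases hθp : θ p
        · rw [hθp, Bool.false_xor] at hp'
          have h0 : p.2 = 0 := by
            simpa [hx] using (of_decide_eq_true hp').1
          omega
        · exact lt_of_lt_of_le (hθM p hθp) (le_max_left _ _)
      · intro p q h2 hagree
        have e1 : θ p = θ q := hθN p q h2 fun i hi => hagree i (lt_of_lt_of_le hi (le_max_left _ _))
        have e2 : x n p = x n q := by
          simp only [hx, decide_eq_decide, h2]
          constructor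
          · rintro ⟨h0, hall⟩
            exact ⟨h0, fun i hi =>
              (hagree i (lt_of_le_of_lt (by omega : i ≤ n) (by omega))).symm.trans (hall i hi)⟩
          · rintro ⟨h0, hall⟩
            exact ⟨h0, fun i hi =>
              (hagree i (lt_of_le_of_lt (by omega : i ≤ n) (by omega))).trans (hall i hi)⟩
        show xor (θ p) (x n p) = xor (θ q) (x n q)
        rw [e1, e2]
    · intro n hcontra
      have hpt : xor (θ (α n, 0)) (x n (α n, 0)) = θ (α n, 0) := congrFun hcontra (α n, 0)
      have hxn : x n (α n, 0) = true := by simp [hx]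
      rw [hxn] at hpt
      revert hpt; cases θ (α n, 0) <;> simp
    · refine tendsto_generateFrom' ?_
      rintro s ⟨A, -, pnat, hs | hs⟩ hθs <;> subst hs <;>
      · simp only [Set.mem_setOf_eq] at hθs ⊢
        filter_upwards [xev α hα (A.boolIndicator, pnat)] with n hn
        show xor (θ (A.boolIndicator, pnat)) (x n (A.boolIndicator, pnat)) = _
        rw [show x n (A.boolIndicator, pnat) = false from hn, Bool.xor_false, hθs]
  · -- convergence of x to ∅
    refine tendsto_generateFrom' ?_
    rintro s ⟨A, -, pnat, hs | hs⟩ hθs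
    · exact absurd hθs (by simp [hs])
    · subst hs
      simp only [Set.mem_setOf_eq]
      filter_upwards [xev α hα (A.boolIndicator, pnat)] with n hn using hn
end

section
/- Let J ⊆ I be ideals on ℕ. If A ⊆ 2^{2^ℕ×ℕ} is nowhere dense in the topology ρ_J, then A is nowhere dense in the topology ρ_I. Consequently J* ⊆ I*, where K* = {F ⊆ ℕ : {φ_n : n ∈ F} is nowhere dense in 𝕏(K)}. -/
section Aux

lemma boolIndicator_inj : Function.Injective (Set.boolIndicator : Set ℕ → ℕ → Bool) := by
  intro A B h
  ext n
  rw [Set.mem_iff_boolIndicator, Set.mem_iff_boolIndicator, h]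

/-- The generator family for `ρ_K`, transported along a map `e` into the cube. -/
def gsX {X : Type} (e : X → Pt → Bool) (K : Set (Set ℕ)) : Set (Set X) :=
  {S | ∃ A ∈ K, ∃ p : ℕ, ∃ b : Bool, S = {x | e x (A.boolIndicator, p) = b}}

lemma master {X : Type} (e : X → Pt → Bool)
    (hreal : ∀ F : Set Pt, F.Finite → ∀ v : Pt → Bool, ∃ ζ : X, ∀ q ∈ F, e ζ q = v q)
    {J I : Set (Set ℕ)} (hJI : J ⊆ I) (A : Set X)
    (h : @IsNowhereDense X (TopologicalSpace.generateFrom (gsX e J)) A) :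
    @IsNowhereDense X (TopologicalSpace.generateFrom (gsX e I)) A := by
  classical
  set tJ := TopologicalSpace.generateFrom (gsX e J) with htJ
  set tI := TopologicalSpace.generateFrom (gsX e I) with htI
  have hsub : gsX e J ⊆ gsX e I := by
    rintro S ⟨B, hB, p, b, rfl⟩; exact ⟨B, hJI hB, p, b, rfl⟩
  have hle : tI ≤ tJ := TopologicalSpace.generateFrom_anti hsub
  have hbI := @TopologicalSpace.isTopologicalBasis_of_subbasis X tI (gsX e I) htI
  have hbJ := @TopologicalSpace.isTopologicalBasis_of_subbasis X tJ (gsX e J) htJ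
  unfold IsNowhereDense at h ⊢
  rw [Set.eq_empty_iff_forall_notMem]
  intro θ hθ
  obtain ⟨U, hUsub, hUopen, hθU⟩ := (@mem_interior X tI θ _).mp hθ
  obtain ⟨B0, hB0, hθB0, hB0U⟩ :=
    @TopologicalSpace.IsTopologicalBasis.exists_subset_of_mem_open X tI _ hbI θ U hθU hUopen
  obtain ⟨f, ⟨hffin, hfsub⟩, rfl⟩ := hB0
  -- split f
  set fJ : Set (Set X) := f ∩ gsX e J with hfJdef
  set fD : Set (Set X) := f \ gsX e J with hfDdef
  have hBJopen : @IsOpen X tJ (⋂₀ fJ) := by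
    apply @Set.Finite.isOpen_sInter X tJ _ (hffin.inter_of_left _)
    intro S hS
    exact @TopologicalSpace.isOpen_generateFrom_of_mem X (gsX e J) S hS.2
  have hθBJ : θ ∈ ⋂₀ fJ := fun S hS => hθB0 S hS.1
  have hnotsub : ¬ (⋂₀ fJ ⊆ @closure X tJ A) := by
    intro hcon
    have : θ ∈ @interior X tJ (@closure X tJ A) :=
      (@mem_interior X tJ θ _).mpr ⟨⋂₀ fJ, hcon, hBJopen, hθBJ⟩
    rw [h] at this
    exact this
  obtain ⟨η, hηBJ, hηncl⟩ := Set.not_subset.mp hnotsub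
  set W : Set X := (@closure X tJ A)ᶜ with hWdef
  have hWopen : @IsOpen X tJ W := @IsClosed.isOpen_compl X tJ _ (@isClosed_closure X tJ A)
  have hV'open : @IsOpen X tJ (W ∩ ⋂₀ fJ) := @IsOpen.inter X tJ _ _ hWopen hBJopen
  have hηV' : η ∈ W ∩ ⋂₀ fJ := ⟨hηncl, hηBJ⟩
  obtain ⟨G0, hG0, hηG0, hG0V'⟩ :=
    @TopologicalSpace.IsTopologicalBasis.exists_subset_of_mem_open X tJ _ hbJ η _ hηV' hV'open
  obtain ⟨g, ⟨hgfin, hgsub⟩, rfl⟩ := hG0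
  -- coordinates of fD pieces
  have hcoordD : ∀ S ∈ fD, ∃ c : Pt, (∃ b : Bool, S = {x | e x c = b}) ∧
      ∀ B ∈ J, c.1 ≠ Set.boolIndicator B := by
    rintro S ⟨hSf, hSnJ⟩
    obtain ⟨A', hA', p, b, rfl⟩ := hfsub hSf
    refine ⟨(A'.boolIndicator, p), ⟨b, rfl⟩, ?_⟩
    intro B hB hcon
    have : B = A' := boolIndicator_inj hcon.symm
    exact hSnJ ⟨B, hB, p, b, by rw [this]⟩
  have hcoordG : ∀ S ∈ g, ∃ c : Pt, (∃ b : Bool, S = {x | e x c = b}) ∧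
      ∃ B ∈ J, c.1 = Set.boolIndicator B := by
    intro S hS
    obtain ⟨B, hB, p, b, rfl⟩ := hgsub hS
    exact ⟨(B.boolIndicator, p), ⟨b, rfl⟩, B, hB, rfl⟩
  choose! coD hcoDspec hcoDnJ using hcoordD
  choose! coG hcoGspec hcoGJ using hcoordG
  set Dset : Set Pt := coD '' fD with hDsetdef
  set Gset : Set Pt := coG '' g with hGsetdef
  have hDfin : Dset.Finite := (hffin.subset Set.diff_subset).image _
  have hGfin : Gset.Finite := hgfin.image _
  set v : Pt → Bool := fun q => if q ∈ Dset then e θ q else e η q with hvdef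
  obtain ⟨ζ, hζ⟩ := hreal (Dset ∪ Gset) (hDfin.union hGfin) v
  -- ζ ∈ ⋂₀ fD
  have hζD : ζ ∈ ⋂₀ fD := by
    intro S hS
    obtain ⟨b, hSb⟩ := hcoDspec S hS
    have hc : coD S ∈ Dset := ⟨S, hS, rfl⟩
    have h1 : e ζ (coD S) = v (coD S) := hζ _ (Or.inl hc)
    have h2 : v (coD S) = e θ (coD S) := if_pos hc
    have h3 : e θ (coD S) = b := by
      have := hθB0 S hS.1
      rw [hSb] at this; exact this
    rw [hSb]; show e ζ (coD S) = b
    rw [h1, h2, h3]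
  -- ζ ∈ ⋂₀ g
  have hζg : ζ ∈ ⋂₀ g := by
    intro S hS
    obtain ⟨b, hSb⟩ := hcoGspec S hS
    obtain ⟨B, hB, hBeq⟩ := hcoGJ S hS
    have hc : coG S ∉ Dset := by
      rintro ⟨S', hS', hmatch⟩
      exact hcoDnJ S' hS' B hB (by rw [hmatch, hBeq])
    have h1 : e ζ (coG S) = v (coG S) := hζ _ (Or.inr ⟨S, hS, rfl⟩)
    have h2 : v (coG S) = e η (coG S) := if_neg hc
    have h3 : e η (coG S) = b := by
      have := hηG0 S hS
      rw [hSb] at this; exact this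
    rw [hSb]; show e ζ (coG S) = b
    rw [h1, h2, h3]
  -- so ζ ∈ B0 ⊆ U ⊆ closure_I A, and ζ ∈ W ∩ ⋂₀ fJ
  have hζV' : ζ ∈ W ∩ ⋂₀ fJ := hG0V' hζg
  have hζB0 : ζ ∈ ⋂₀ f := by
    intro S hS
    by_cases hSJ : S ∈ gsX e J
    · exact hζV'.2 S ⟨hS, hSJ⟩
    · exact hζD S ⟨hS, hSJ⟩
  have hζcl : ζ ∈ @closure X tI A := hUsub (hB0U hζB0)
  have hV'openI : @IsOpen X tI (W ∩ ⋂₀ fJ) := hV'open.mono hle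
  obtain ⟨x, hxV', hxA⟩ := (@mem_closure_iff X tI ζ A).mp hζcl _ hV'openI hζV'
  exact hxV'.1 (Set.mem_of_mem_of_subset hxA (@subset_closure X tJ A))

lemma real_XX (F : Set Pt) (hF : F.Finite) (v : Pt → Bool) :
    ∃ θ ∈ XX, ∀ q ∈ F, θ q = v q := by
  classical
  set s := hF.toFinset with hs
  set N : ℕ := s.sup (fun a => s.sup (fun b =>
    if h : a.1 = b.1 then 0 else Nat.find (Function.ne_iff.mp h) + 1)) with hNdef
  have hN : ∀ a ∈ F, ∀ b ∈ F, a.1 ≠ b.1 → ∃ m < N, a.1 m ≠ b.1 m := by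
    intro a ha b hb hne
    refine ⟨Nat.find (Function.ne_iff.mp hne), ?_, Nat.find_spec (Function.ne_iff.mp hne)⟩
    have hbmem : b ∈ s := by rw [hs, Set.Finite.mem_toFinset]; exact hb
    have hamem : a ∈ s := by rw [hs, Set.Finite.mem_toFinset]; exact ha
    have h1 : (fun b => if h : a.1 = b.1 then 0 else Nat.find (Function.ne_iff.mp h) + 1) b ≤
        s.sup (fun b => if h : a.1 = b.1 then 0 else Nat.find (Function.ne_iff.mp h) + 1) :=
      Finset.le_sup (f := fun b => if h : a.1 = b.1 then 0 else
        Nat.find (Function.ne_iff.mp h) + 1) hbmem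
    have h2 : (fun a => s.sup (fun b =>
          if h : a.1 = b.1 then 0 else Nat.find (Function.ne_iff.mp h) + 1)) a ≤ N :=
      Finset.le_sup (f := fun a => s.sup (fun b => if h : a.1 = b.1 then 0 else
        Nat.find (Function.ne_iff.mp h) + 1)) hamem
    simp only [dif_neg hne] at h1
    simp only at h2
    omega
  set t := s.filter (fun a => v a = true) with ht
  set θ : Pt → Bool := fun p => decide (∃ a ∈ t, p.2 = a.2 ∧ ∀ i < N, p.1 i = a.1 i) with hθ
  have hmem : θ ∈ XX := by
    refine ⟨t.toList.map (fun a => (a.1, N, a.2)), ?_⟩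
    intro p
    rw [hθ]
    simp only [decide_eq_true_eq, List.mem_map, Finset.mem_toList]
    constructor
    · rintro ⟨a, ha, h1, h2⟩
      exact ⟨(a.1, N, a.2), ⟨a, ha, rfl⟩, h1, h2⟩
    · rintro ⟨q, ⟨a, ha, rfl⟩, h1, h2⟩
      exact ⟨a, ha, h1, h2⟩
  refine ⟨θ, hmem, ?_⟩
  intro q hq
  cases hv : v q with
  | true =>
    rw [hθ]
    simp only [decide_eq_true_eq]
    exact ⟨q, by rw [ht, Finset.mem_filter, hs, Set.Finite.mem_toFinset]; exact ⟨hq, hv⟩,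
      rfl, fun i _ => rfl⟩
  | false =>
    rw [hθ]
    simp only [decide_eq_false_iff_not]
    rintro ⟨a, ha, h1, h2⟩
    rw [ht, Finset.mem_filter, hs, Set.Finite.mem_toFinset] at ha
    obtain ⟨haF, hav⟩ := ha
    have h3 : q.1 = a.1 := by
      by_contra hne
      obtain ⟨m, hm, hne'⟩ := hN q hq a haF hne
      exact hne' (h2 m hm)
    have : q = a := Prod.ext h3 h1
    rw [this, hav] at hv
    exact absurd hv (by simp)

lemma rho_eq (K : Set (Set ℕ)) :
    rho K = TopologicalSpace.generateFrom (gsX (id : (Pt → Bool) → Pt → Bool) K) := by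
  unfold rho gsX
  congr 1
  ext S
  constructor
  · rintro ⟨A, hA, p, h | h⟩
    exacts [⟨A, hA, p, true, h⟩, ⟨A, hA, p, false, h⟩]
  · rintro ⟨A, hA, p, b, rfl⟩
    cases b
    exacts [⟨A, hA, p, Or.inr rfl⟩, ⟨A, hA, p, Or.inl rfl⟩]

lemma subTop_eq (K : Set (Set ℕ)) :
    subTop XX K = TopologicalSpace.generateFrom
      (gsX (fun x : {θ // θ ∈ XX} => x.1) K) := by
  unfold subTop
  rw [rho_eq, induced_generateFrom_eq]
  congr 1
  ext S
  constructor
  · rintro ⟨T, ⟨A, hA, p, b, rfl⟩, rfl⟩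
    exact ⟨A, hA, p, b, rfl⟩
  · rintro ⟨A, hA, p, b, rfl⟩
    exact ⟨{θ | id θ (A.boolIndicator, p) = b}, ⟨A, hA, p, b, rfl⟩, rfl⟩

end Aux

/-- If `J ⊆ I`, then every `ρ_J`-nowhere dense set is `ρ_I`-nowhere dense; consequently
`J* ⊆ I*`. -/
theorem nwd_mono_and_star_mono (J I : Set (Set ℕ)) (hJ : IsIdeal J) (hI : IsIdeal I)
    (hJI : J ⊆ I)
    (φ : ℕ → Pt → Bool) (hinj : Function.Injective φ) (hran : Set.range φ = XX) :
    (∀ A : Set (Pt → Bool), @IsNowhereDense _ (rho J) A → @IsNowhereDense _ (rho I) A) ∧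
    starIdeal φ J ⊆ starIdeal φ I :=  by
  have hreal_id : ∀ F : Set Pt, F.Finite → ∀ v : Pt → Bool,
      ∃ ζ : Pt → Bool, ∀ q ∈ F, id ζ q = v q := fun F _ v => ⟨v, fun q _ => rfl⟩
  have hreal_sub : ∀ F : Set Pt, F.Finite → ∀ v : Pt → Bool,
      ∃ ζ : {θ // θ ∈ XX}, ∀ q ∈ F, ζ.1 q = v q := by
    intro F hF v
    obtain ⟨θ, hθ, hq⟩ := real_XX F hF v
    exact ⟨⟨θ, hθ⟩, hq⟩
  constructor
  · intro A hA
    rw [rho_eq] at hA ⊢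
    exact master id hreal_id hJI A hA
  · intro F hF
    simp only [starIdeal, Set.mem_setOf_eq] at hF ⊢
    rw [subTop_eq] at hF ⊢
    exact master _ hreal_sub hJI _ hF
end

section
/- Let I be an ideal on ℕ. If F ∈ I, then the set F̂ = {ψ_n : n ∈ F} is closed and discrete in 𝕐(I) = ({ψ_n : n ∈ ℕ}, ρ_I). -/
/-- Every member of a list has its last coordinate below some bound. -/
lemma aux_list_bound (L : List ((ℕ → Bool) × ℕ × ℕ)) : ∃ k, ∀ q ∈ L, q.2.2 < k := by
  induction L with
  | nil => exact ⟨0, by simp⟩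
  | cons a l ih =>
    obtain ⟨k, hk⟩ := ih
    refine ⟨max (a.2.2 + 1) k, ?_⟩
    intro q hq
    rcases List.mem_cons.mp hq with rfl | h
    · omega
    · exact lt_of_lt_of_le (hk q h) (le_max_right _ _)

/-- Any element of `𝕏` vanishes at some column, for any first coordinate. -/
lemma aux_exists_false {θ : Pt → Bool} (hθ : θ ∈ XX) (α : ℕ → Bool) :
    ∃ k, θ (α, k) = false := by
  obtain ⟨L, hL⟩ := hθ
  obtain ⟨k, hk⟩ := aux_list_bound L
  refine ⟨k, ?_⟩
  by_contra h
  have ht : θ (α, k) = true := by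
    cases hb : θ (α, k) with
    | false => exact absurd hb h
    | true => rfl
  obtain ⟨q, hq, hq2, -⟩ := (hL (α, k)).mp ht
  exact (hk q hq).ne' hq2

/-- If `F ∈ I`, then `F̂ = {ψ_n : n ∈ F}` is closed and discrete in `𝕐(I)`. -/
theorem Fhat_closed_discrete (I : Set (Set ℕ)) (hI : IsIdeal I)
    (φ : ℕ → Pt → Bool) (hinj : Function.Injective φ) (hran : Set.range φ = XX)
    (F : Set ℕ) (hF : F ∈ I) :
    ∀ S : Set {θ // θ ∈ YY φ}, S = {θ | ∃ n ∈ F, psi φ n = θ.1} →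
      @IsClosed _ (subTop (YY φ) I) S ∧
      ∀ y ∈ S, ∃ U, @IsOpen _ (subTop (YY φ) I) U ∧ U ∩ S = {y} := by
  intro S hS
  letI tX : TopologicalSpace (Pt → Bool) := rho I
  letI tY : TopologicalSpace {θ // θ ∈ YY φ} := subTop (YY φ) I
  have hφXX : ∀ m, φ m ∈ XX := fun m => hran ▸ Set.mem_range_self m
  -- a basic "false" set is open
  have hbasic : ∀ A ∈ I, ∀ p : ℕ,
      IsOpen {θ : Pt → Bool | θ (A.boolIndicator, p) = false} := by
    intro A hA p
    exact TopologicalSpace.GenerateOpen.basic _ ⟨A, hA, p, Or.inr rfl⟩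
  have hinduced : ∀ (V : Set (Pt → Bool)), IsOpen V →
      IsOpen (Subtype.val ⁻¹' V : Set {θ // θ ∈ YY φ}) := by
    intro V hV
    exact ⟨V, hV, rfl⟩
  constructor
  · -- closedness
    constructor
    have hcompl : Sᶜ = Subtype.val ⁻¹'
        (⋃ p : ℕ, {θ : Pt → Bool | θ (F.boolIndicator, p) = false}) := by
      ext ⟨θ, hθ⟩
      simp only [Set.mem_compl_iff, hS, Set.mem_setOf_eq, Set.mem_preimage,
        Set.mem_iUnion]
      constructor
      · intro hnot
        obtain ⟨m, rfl⟩ := hθ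
        have hmF : m ∉ F := by
          intro hm
          exact hnot ⟨m, hm, rfl⟩
        obtain ⟨k, hk⟩ := aux_exists_false (hφXX m) F.boolIndicator
        refine ⟨k, ?_⟩
        have : F.boolIndicator m = false := (Set.notMem_iff_boolIndicator _ _).mp hmF
        simp [psi, hk, this]
      · rintro ⟨p, hp⟩ ⟨n, hn, hψ⟩
        have : F.boolIndicator n = true := (Set.mem_iff_boolIndicator _ _).mp hn
        rw [← hψ] at hp
        simp [psi, this] at hp
    rw [hcompl]
    exact hinduced _ (isOpen_iUnion fun p => hbasic F hF p)
  · -- discreteness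
    intro y hy
    obtain ⟨n, hn, hψ⟩ := hS ▸ hy
    have hA : F \ {n} ∈ I := hI.1 F hF _ Set.diff_subset
    obtain ⟨k, hk⟩ := aux_exists_false (hφXX n) (F \ {n} : Set ℕ).boolIndicator
    refine ⟨Subtype.val ⁻¹' {θ | θ ((F \ {n} : Set ℕ).boolIndicator, k) = false},
      hinduced _ (hbasic _ hA k), ?_⟩
    ext z
    simp only [Set.mem_inter_iff, Set.mem_preimage, Set.mem_setOf_eq, Set.mem_singleton_iff]
    constructor
    · rintro ⟨hz1, hz2⟩
      obtain ⟨m, hm, hψm⟩ := hS ▸ hz2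
      have hmA : (F \ {n} : Set ℕ).boolIndicator m = false := by
        by_contra h
        have : (F \ {n} : Set ℕ).boolIndicator m = true := by
          cases hb : (F \ {n} : Set ℕ).boolIndicator m with
          | false => exact absurd hb h
          | true => rfl
        rw [← hψm] at hz1
        simp [psi, this] at hz1
      have hmn : m = n := by
        have := (Set.notMem_iff_boolIndicator _ _).mpr hmA
        simp only [Set.mem_diff, Set.mem_singleton_iff, not_and, not_not] at this
        exact this hm
      apply Subtype.ext
      rw [← hψm, hmn, hψ]
    · rintro rfl
      have hnA : (F \ {n} : Set ℕ).boolIndicator n = false := by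
        apply (Set.notMem_iff_boolIndicator _ _).mp
        simp
      constructor
      · rw [← hψ]
        simp [psi, hk, hnA]
      · exact hy
end

section
/- Let I be a tall ideal on ℕ. Then 𝕐(I) contains no non-trivial convergent sequences: for every infinite A ⊆ ℕ, the set {ψ_n : n ∈ A} is not a convergent sequence in 𝕐(I). In particular, if I is tall, 𝕐(I) is not homeomorphic to 𝕏(I). -/
/-- Any member of `XX` vanishes at sufficiently large second coordinates. -/
lemma XX_eventually_false {θ : Pt → Bool} (hθ : θ ∈ XX) :
    ∃ N : ℕ, ∀ α : ℕ → Bool, ∀ p ≥ N, θ (α, p) = false := by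
  obtain ⟨L, hL⟩ := hθ
  refine ⟨(L.map (fun q => q.2.2)).sum + 1, fun α p hp => ?_⟩
  by_contra hfalse
  have htrue : θ (α, p) = true := by
    cases h : θ (α, p) with
    | false => exact absurd h hfalse
    | true => rfl
  obtain ⟨q, hqL, hq2, _⟩ := (hL (α, p)).mp htrue
  have : q.2.2 ≤ (L.map (fun q => q.2.2)).sum :=
    List.single_le_sum (fun x _ => Nat.zero_le x) _ (List.mem_map_of_mem hqL)
  omega

/-- The empty set belongs to `XX`. -/
lemma zero_mem_XX : (fun _ => false : Pt → Bool) ∈ XX := ⟨[], by simp⟩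

/-- Full slices belong to `XX`. -/
lemma slice_mem_XX (k : ℕ) : (fun p => decide (p.2 = k) : Pt → Bool) ∈ XX := by
  refine ⟨[(fun _ => false, 0, k)], fun p => ?_⟩
  simp

/-- The slice sequence eventually enters every `rho I`-open set containing `∅`. -/
lemma slices_eventually_mem (I : Set (Set ℕ)) (W : Set (Pt → Bool))
    (hW : @IsOpen _ (rho I) W) (h0 : (fun _ => false : Pt → Bool) ∈ W) :
    ∃ N : ℕ, ∀ k ≥ N, (fun p => decide (p.2 = k + 1) : Pt → Bool) ∈ W := by
  induction hW with
  | basic S hS =>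
    obtain ⟨A, -, p, hor | hor⟩ := hS
    · exfalso; rw [hor] at h0; exact Bool.false_ne_true h0
    · subst hor
      exact ⟨p, fun k hk => by simp only [Set.mem_setOf_eq, decide_eq_false_iff_not]; omega⟩
  | univ => exact ⟨0, fun k _ => trivial⟩
  | inter S T _ _ ihS ihT =>
    obtain ⟨N1, h1⟩ := ihS h0.1
    obtain ⟨N2, h2⟩ := ihT h0.2
    exact ⟨max N1 N2, fun k hk => ⟨h1 k (le_trans (le_max_left _ _) hk),
      h2 k (le_trans (le_max_right _ _) hk)⟩⟩
  | sUnion S _ ih =>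
    obtain ⟨T, hT, hθT⟩ := h0
    obtain ⟨N, hN⟩ := ih T hT hθT
    exact ⟨N, fun k hk => ⟨T, hT, hN k hk⟩⟩

/-- If `I` is tall, then `𝕐(I)` has no non-trivial convergent sequences: for every infinite
`A ⊆ ℕ`, the sequence `(ψ_n)_{n ∈ A}` converges to no point of `𝕐(I)`.  In particular,
`𝕐(I)` is not homeomorphic to `𝕏(I)`. -/
theorem YY_no_convergent_sequences_of_tall (I : Set (Set ℕ)) (hI : IsIdeal I)
    (htall : ∀ A : Set ℕ, A.Infinite → ∃ B ⊆ A, B.Infinite ∧ B ∈ I)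
    (φ : ℕ → Pt → Bool) (hinj : Function.Injective φ) (hran : Set.range φ = XX) :
    (∀ A : Set ℕ, A.Infinite → ∀ θ ∈ YY φ,
      ¬ (∀ U : Set (Pt → Bool), @IsOpen _ (rho I) U → θ ∈ U →
          {n | n ∈ A ∧ psi φ n ∉ U}.Finite)) ∧
    IsEmpty (@Homeomorph {θ // θ ∈ XX} {θ // θ ∈ YY φ} (subTop XX I) (subTop (YY φ) I)) := by
  have main : ∀ A : Set ℕ, A.Infinite → ∀ θ ∈ YY φ,
      ¬ (∀ U : Set (Pt → Bool), @IsOpen _ (rho I) U → θ ∈ U →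
          {n | n ∈ A ∧ psi φ n ∉ U}.Finite) := by
    intro A hA θ hθ hconv
    obtain ⟨m, rfl⟩ := hθ
    obtain ⟨B, hBA, hBinf, hBI⟩ := htall A hA
    set B' : Set ℕ := B \ {m} with hB'def
    have hB'I : B' ∈ I := hI.1 B hBI B' Set.diff_subset
    have hB'inf : B'.Infinite := hBinf.diff (Set.finite_singleton m)
    have hφm : φ m ∈ XX := hran ▸ Set.mem_range_self m
    obtain ⟨N, hN⟩ := XX_eventually_false hφm
    set U : Set (Pt → Bool) := {θ | θ (B'.boolIndicator, N) = false} with hUdef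
    have hUopen : @IsOpen _ (rho I) U :=
      TopologicalSpace.GenerateOpen.basic _ ⟨B', hB'I, N, Or.inr rfl⟩
    have hmU : psi φ m ∈ U := by
      show psi φ m (B'.boolIndicator, N) = false
      have h1 : φ m (B'.boolIndicator, N) = false := hN _ N le_rfl
      have h2 : B'.boolIndicator m = false :=
        (Set.notMem_iff_boolIndicator _ _).mp (fun h => h.2 rfl)
      simp [psi, h1, h2]
    have hfin := hconv U hUopen hmU
    refine hB'inf (hfin.subset fun n hn => ?_)
    refine ⟨hBA hn.1, ?_⟩
    have : B'.boolIndicator n = true := (Set.mem_iff_boolIndicator _ _).mp hn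
    simp [hUdef, psi, this]
  refine ⟨main, ?_⟩
  letI tX : TopologicalSpace {θ // θ ∈ XX} := subTop XX I
  letI tY : TopologicalSpace {θ // θ ∈ YY φ} := subTop (YY φ) I
  constructor
  intro h
  -- the convergent sequence in `XX`
  set θ0 : Pt → Bool := fun _ => false with hθ0def
  set θs : ℕ → Pt → Bool := fun k p => decide (p.2 = k + 1) with hθsdef
  have hθsX : ∀ k, θs k ∈ XX := fun k => slice_mem_XX (k + 1)
  set x0 : {θ // θ ∈ XX} := ⟨θ0, zero_mem_XX⟩ with hx0def
  set xs : ℕ → {θ // θ ∈ XX} := fun k => ⟨θs k, hθsX k⟩ with hxsdef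
  -- its image under `h`
  choose n hn using fun k => (h (xs k)).2
  have hninj : Function.Injective n := by
    intro k j hkj
    have h1 : psi φ (n k) = psi φ (n j) := by rw [hkj]
    rw [hn k, hn j] at h1
    have h2 : xs k = xs j := h.injective (Subtype.ext h1)
    have h3 : θs k = θs j := congrArg Subtype.val h2
    have h4 : decide (k + 1 = k + 1) = decide (k + 1 = j + 1) :=
      congrFun h3 ((fun _ => false), k + 1)
    simp only [decide_eq_decide] at h4
    have h5 : k + 1 = j + 1 := h4.mp trivial
    omega
  have hAinf : (Set.range n).Infinite := Set.infinite_range_of_injective hninj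
  refine main (Set.range n) hAinf (h x0).1 (h x0).2 ?_
  intro U hU hθ'U
  -- pull `U` back through `h`
  have hvalU : @IsOpen _ tY (Subtype.val ⁻¹' U) := ⟨U, hU, rfl⟩
  have hV : IsOpen ((⇑h) ⁻¹' (Subtype.val ⁻¹' U)) :=
    h.continuous.isOpen_preimage _ hvalU
  obtain ⟨W, hW, hWV⟩ := hV
  have hθ0W : θ0 ∈ W := by
    have hx0V : x0 ∈ (⇑h) ⁻¹' (Subtype.val ⁻¹' U) := hθ'U
    rw [← hWV] at hx0V
    exact hx0V
  obtain ⟨N, hN⟩ := slices_eventually_mem I W hW hθ0W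
  refine ((Set.finite_Iio N).image n).subset ?_
  rintro m ⟨⟨k, rfl⟩, hmU⟩
  refine ⟨k, ?_, rfl⟩
  by_contra hk
  have hkN : k ≥ N := by simpa using hk
  have h1 : xs k ∈ (⇑h) ⁻¹' (Subtype.val ⁻¹' U) := by
    rw [← hWV]; exact hN k hkN
  have h2 : psi φ (n k) ∈ U := by rw [hn k]; exact h1
  exact hmU h2
end
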